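/- If (A₁, F) and (A₂, G) are finite Ramsey algebras over the same language, then their Cartesian product (A₁ × A₂, F × G) with coordinatewise operations is a Ramsey algebra. -/

import Mathlib

namespace RamseyAlg

/- Orderly-term syntax trees over an operation-index type `ι`:
`leaf` is the identity (a single variable), `node g f` applies the basic
operation `g` to the results of the trees in the forest `f`. -/
mutual
  inductive OTree (ι : Type) : Type
    | leaf : OTree ι
    | node : ι → OForest ι → OTree ι
  inductive OForest (ι : Type) : Type
    | nil : OForest ι
    | cons : OTree ι → OForest ι → OForest ι
end

def OForest.length {ι : Type} : OForest ι → ℕ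
  | .nil => 0
  | .cons _ f => f.length + 1

/- Well-formedness: each node applies a `k`-ary basic operation to exactly
`k` subtrees, where `ar` gives the arities. -/
mutual
  def OTree.WF {ι : Type} (ar : ι → ℕ) : OTree ι → Prop
    | .leaf => True
    | .node g f => OForest.length f = ar g ∧ OForest.WF ar f
  def OForest.WF {ι : Type} (ar : ι → ℕ) : OForest ι → Prop
    | .nil => True
    | .cons t f => OTree.WF ar t ∧ OForest.WF ar f
end

/- Evaluation of an orderly term on an input list: the variables of the term
consume an initial segment of the list, in order, each exactly once; what
remains of the list is returned alongside the value. -/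
mutual
  def OTree.evalAux {ι A : Type} (F : ι → List A → A) :
      OTree ι → List A → Option (A × List A)
    | .leaf, [] => none
    | .leaf, a :: rest => some (a, rest)
    | .node g f, l =>
      match OForest.evalAux F f l with
      | none => none
      | some (rs, rest) => some (F g rs, rest)
  def OForest.evalAux {ι A : Type} (F : ι → List A → A) :
      OForest ι → List A → Option (List A × List A)
    | .nil, l => some ([], l)
    | .cons t f, l =>
      match OTree.evalAux F t l with
      | none => none
      | some (r, rest) =>
        match OForest.evalAux F f rest with
        | none => none
        | some (rs, rest') => some (r :: rs, rest')
end

/- The value of the orderly term `t` on the finite sequence `l`, defined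
exactly when the variables of `t` consume all of `l`. -/
def OTree.eval {ι A : Type} (F : ι → List A → A) (t : OTree ι) (l : List A) :
    Option A :=
  match OTree.evalAux F t l with
  | some (a, []) => some a
  | _ => none

/- `Reduction ar F a b` : `a` is a reduction of `b` with respect to `F`, i.e.
there are well-formed orderly terms `t j` applied to consecutive disjoint
finite subsequences of `b` (extracted by the strictly monotone `e`, in blocks
of lengths `len j`) producing the terms of `a` in order. -/
def Reduction {ι A : Type} (ar : ι → ℕ) (F : ι → List A → A)
    (a b : ℕ → A) : Prop :=
  ∃ (t : ℕ → OTree ι) (len : ℕ → ℕ) (e : ℕ → ℕ),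
    StrictMono e ∧ (∀ j, (t j).WF ar) ∧
    ∀ j, (t j).eval F ((List.range (len j)).map
        (fun i => b (e ((∑ m ∈ Finset.range j, len m) + i)))) = some (a j)

/- `FR ar F b` : the set of values of orderly terms over `F` applied to
finite subsequences of `b`. -/
def FR {ι A : Type} (ar : ι → ℕ) (F : ι → List A → A) (b : ℕ → A) : Set A :=
  { x | ∃ (t : OTree ι) (l : List ℕ), t.WF ar ∧ l.Chain' (· < ·) ∧
      t.eval F (l.map b) = some x }

/- `(A, F)` is a Ramsey algebra: every infinite sequence has, for every
`X ⊆ A`, a reduction homogeneous for `X`. -/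
def RamseyAlgebra {ι A : Type} (ar : ι → ℕ) (F : ι → List A → A) : Prop :=
  ∀ (b : ℕ → A) (X : Set A), ∃ a : ℕ → A,
    Reduction ar F a b ∧ (FR ar F a ⊆ X ∨ FR ar F a ∩ X = ∅)

end RamseyAlg


namespace RamseyAlg

variable {ι A : Type}

theorem eval_eq_some_iff {F : ι → List A → A} {t : OTree ι} {l : List A} {x : A} :
    t.eval F l = some x ↔ OTree.evalAux F t l = some (x, []) := by
  unfold OTree.eval
  cases h : OTree.evalAux F t l with
  | none => simp
  | some p =>
    obtain ⟨a, r⟩ := p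
    cases r with
    | nil => simp
    | cons b r => simp

mutual
theorem evalAux_append {F : ι → List A → A} :
    ∀ (t : OTree ι) (l r l' : List A) (x : A),
      OTree.evalAux F t l = some (x, r) →
      OTree.evalAux F t (l ++ l') = some (x, r ++ l')
  | .leaf, l, r, l', x => by
    cases l with
    | nil => intro h; simp [OTree.evalAux] at h
    | cons a rest =>
      intro h
      simp [OTree.evalAux] at h ⊢
      exact ⟨h.1, by rw [h.2]⟩
  | .node g f, l, r, l', x => by
    intro h
    unfold OTree.evalAux at h ⊢
    cases hf : OForest.evalAux F f l with
    | none => rw [hf] at h; simp at h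
    | some p =>
      obtain ⟨rs, rest⟩ := p
      rw [hf] at h
      simp at h
      rw [forestEvalAux_append f l rest l' rs hf]
      dsimp only
      simp [h.1, h.2]
theorem forestEvalAux_append {F : ι → List A → A} :
    ∀ (f : OForest ι) (l r l' : List A) (xs : List A),
      OForest.evalAux F f l = some (xs, r) →
      OForest.evalAux F f (l ++ l') = some (xs, r ++ l')
  | .nil, l, r, l', xs => by
    intro h
    simp [OForest.evalAux] at h ⊢
    exact ⟨h.1, by rw [h.2]⟩
  | .cons t f, l, r, l', xs => by
    intro h
    unfold OForest.evalAux at h ⊢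
    cases ht : OTree.evalAux F t l with
    | none => rw [ht] at h; simp at h
    | some p =>
      obtain ⟨v, rest⟩ := p
      rw [ht] at h
      simp at h
      rw [evalAux_append t l rest l' v ht]
      dsimp only
      cases hf : OForest.evalAux F f rest with
      | none => rw [hf] at h; simp at h
      | some q =>
        obtain ⟨vs, rest'⟩ := q
        rw [hf] at h
        simp at h
        rw [forestEvalAux_append f rest rest' l' vs hf]
        dsimp only
        simp [h.1, h.2]
end


mutual
def OTree.subst {ι : Type} : OTree ι → List (OTree ι) → OTree ι × List (OTree ι)
  | .leaf, [] => (.leaf, [])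
  | .leaf, s :: ss => (s, ss)
  | .node g f, ss =>
    let p := OForest.subst f ss
    (.node g p.1, p.2)
def OForest.subst {ι : Type} : OForest ι → List (OTree ι) → OForest ι × List (OTree ι)
  | .nil, ss => (.nil, ss)
  | .cons t f, ss =>
    let p := OTree.subst t ss
    let q := OForest.subst f p.2
    (.cons p.1 q.1, q.2)
end

theorem OForest.subst_len {ι : Type} :
    ∀ (f : OForest ι) (ss : List (OTree ι)), ((f.subst ss).1).length = f.length
  | .nil, ss => rfl
  | .cons t f, ss => by
    show (OForest.cons (t.subst ss).1 (OForest.subst f (t.subst ss).2).1).length = _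
    simp [OForest.length, OForest.subst_len f]

mutual
theorem OTree.subst_wf {ι : Type} (ar : ι → ℕ) :
    ∀ (t : OTree ι) (ss : List (OTree ι)), t.WF ar → (∀ s ∈ ss, s.WF ar) →
      (t.subst ss).1.WF ar ∧ ∀ s ∈ (t.subst ss).2, s.WF ar
  | .leaf, [] => fun _ _ => ⟨trivial, by simp [OTree.subst]⟩
  | .leaf, s :: ss => fun _ h => by
    simp [OTree.subst]
    exact ⟨h s (by simp), fun u hu => h u (by simp [hu])⟩
  | .node g f, ss => fun hwf hss => by
    have := OForest.subst_wf ar f ss hwf.2 hss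
    have hlen := OForest.subst_len f ss
    exact ⟨⟨hlen.trans hwf.1, this.1⟩, this.2.1⟩
theorem OForest.subst_wf {ι : Type} (ar : ι → ℕ) :
    ∀ (f : OForest ι) (ss : List (OTree ι)), f.WF ar → (∀ s ∈ ss, s.WF ar) →
      (f.subst ss).1.WF ar ∧ (∀ s ∈ (f.subst ss).2, s.WF ar) ∧ True
  | .nil, ss => fun _ h => ⟨trivial, h, trivial⟩
  | .cons t f, ss => fun hwf hss => by
    have h1 := OTree.subst_wf ar t ss hwf.1 hss
    have h2 := OForest.subst_wf ar f (t.subst ss).2 hwf.2 h1.2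
    exact ⟨⟨h1.1, h2.1⟩, h2.2.1, trivial⟩
end


mutual
theorem subst_evalAux {F : ι → List A → A} :
    ∀ (t : OTree ι) (ps : List (OTree ι × List A × A)) (x : A) (r : List A),
      (∀ p ∈ ps, OTree.eval F p.1 p.2.1 = some p.2.2) →
      OTree.evalAux F t (ps.map (fun p => p.2.2)) = some (x, r) →
      ∃ qs : List (OTree ι × List A × A), qs <:+ ps ∧ r = qs.map (fun p => p.2.2) ∧
        (t.subst (ps.map (fun p => p.1))).2 = qs.map (fun p => p.1) ∧
        OTree.evalAux F (t.subst (ps.map (fun p => p.1))).1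
            ((ps.map (fun p => p.2.1)).flatten)
          = some (x, (qs.map (fun p => p.2.1)).flatten)
  | .leaf, ps, x, r => by
    intro hps h
    cases ps with
    | nil => simp [OTree.evalAux] at h
    | cons p qs =>
      simp only [List.map_cons, OTree.evalAux, Option.some.injEq, Prod.mk.injEq] at h
      refine ⟨qs, List.suffix_cons p qs, h.2.symm, rfl, ?_⟩
      have hp : OTree.evalAux F p.1 p.2.1 = some (p.2.2, []) :=
        eval_eq_some_iff.mp (hps p (by simp))
      have := evalAux_append p.1 p.2.1 [] ((qs.map (fun p => p.2.1)).flatten) p.2.2 hp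
      simp only [List.nil_append] at this
      simp only [List.map_cons, List.flatten_cons, OTree.subst]
      rw [this, h.1]
  | .node g f, ps, x, r => by
    intro hps h
    unfold OTree.evalAux at h
    cases hf : OForest.evalAux F f (ps.map (fun p => p.2.2)) with
    | none => rw [hf] at h; simp at h
    | some pr =>
      obtain ⟨rs, rest⟩ := pr
      rw [hf] at h
      simp only [Option.some.injEq, Prod.mk.injEq] at h
      obtain ⟨qs, hsuf, hrest, hsnd, heval⟩ := subst_forestEvalAux f ps rs rest hps hf
      refine ⟨qs, hsuf, by rw [← h.2, hrest], hsnd, ?_⟩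
      show OTree.evalAux F (OTree.node g (f.subst (ps.map (fun p => p.1))).1) _ = _
      unfold OTree.evalAux
      rw [heval]
      dsimp only
      rw [h.1]
theorem subst_forestEvalAux {F : ι → List A → A} :
    ∀ (f : OForest ι) (ps : List (OTree ι × List A × A)) (xs : List A) (r : List A),
      (∀ p ∈ ps, OTree.eval F p.1 p.2.1 = some p.2.2) →
      OForest.evalAux F f (ps.map (fun p => p.2.2)) = some (xs, r) →
      ∃ qs : List (OTree ι × List A × A), qs <:+ ps ∧ r = qs.map (fun p => p.2.2) ∧
        (f.subst (ps.map (fun p => p.1))).2 = qs.map (fun p => p.1) ∧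
        OForest.evalAux F (f.subst (ps.map (fun p => p.1))).1
            ((ps.map (fun p => p.2.1)).flatten)
          = some (xs, (qs.map (fun p => p.2.1)).flatten)
  | .nil, ps, xs, r => by
    intro hps h
    simp only [OForest.evalAux, Option.some.injEq, Prod.mk.injEq] at h
    exact ⟨ps, List.suffix_refl ps, h.2.symm, rfl, by
      simp only [OForest.subst, OForest.evalAux, h.1]⟩
  | .cons t f, ps, xs, r => by
    intro hps h
    unfold OForest.evalAux at h
    cases ht : OTree.evalAux F t (ps.map (fun p => p.2.2)) with
    | none => rw [ht] at h; simp at h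
    | some pr =>
      obtain ⟨v, rest⟩ := pr
      rw [ht] at h
      dsimp only at h
      obtain ⟨qs₁, hsuf₁, hrest₁, hsnd₁, heval₁⟩ := subst_evalAux t ps v rest hps ht
      cases hf : OForest.evalAux F f rest with
      | none => rw [hf] at h; simp at h
      | some qr =>
        obtain ⟨vs, rest'⟩ := qr
        rw [hf] at h
        simp only [Option.some.injEq, Prod.mk.injEq] at h
        rw [hrest₁] at hf
        have hps₁ : ∀ p ∈ qs₁, OTree.eval F p.1 p.2.1 = some p.2.2 :=
          fun p hp => hps p (hsuf₁.subset hp)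
        obtain ⟨qs₂, hsuf₂, hrest₂, hsnd₂, heval₂⟩ :=
          subst_forestEvalAux f qs₁ vs rest' hps₁ hf
        refine ⟨qs₂, hsuf₂.trans hsuf₁, by rw [← h.2, hrest₂], ?_, ?_⟩
        · show (OForest.subst f (OTree.subst t (ps.map (fun p => p.1))).2).2 = _
          rw [hsnd₁, hsnd₂]
        · show OForest.evalAux F
            (OForest.cons (t.subst (ps.map (fun p => p.1))).1
              (OForest.subst f (OTree.subst t (ps.map (fun p => p.1))).2).1) _ = _
          unfold OForest.evalAux
          rw [heval₁]
          dsimp only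
          rw [hsnd₁, heval₂]
          dsimp only
          rw [h.1]
end


theorem subst_eval {F : ι → List A → A} (t : OTree ι)
    (ps : List (OTree ι × List A × A)) (x : A)
    (hps : ∀ p ∈ ps, OTree.eval F p.1 p.2.1 = some p.2.2)
    (h : t.eval F (ps.map (fun p => p.2.2)) = some x) :
    (t.subst (ps.map (fun p => p.1))).1.eval F ((ps.map (fun p => p.2.1)).flatten)
      = some x := by
  rw [eval_eq_some_iff] at h ⊢
  obtain ⟨qs, -, hq, -, heval⟩ := subst_evalAux t ps x [] hps h
  have hqs : qs = [] := by
    cases qs with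
    | nil => rfl
    | cons a l => simp at hq
  subst hqs
  simpa using heval

section Proj

variable {B C : Type} (π : B → C) (HB : ι → List B → B) (FC : ι → List C → C)

mutual
theorem proj_evalAux (hπ : ∀ i l, π (HB i l) = FC i (l.map π)) :
    ∀ (t : OTree ι) (l : List B),
      OTree.evalAux FC t (l.map π)
        = Option.map (Prod.map π (List.map π)) (OTree.evalAux HB t l)
  | .leaf, [] => by simp [OTree.evalAux]
  | .leaf, b :: r => by simp [OTree.evalAux, Prod.map]
  | .node g f, l => by
    unfold OTree.evalAux
    rw [proj_forestEvalAux hπ f l]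
    cases hf : OForest.evalAux HB f l with
    | none => simp
    | some p =>
      obtain ⟨rs, rest⟩ := p
      simp [Prod.map, hπ g rs]
theorem proj_forestEvalAux (hπ : ∀ i l, π (HB i l) = FC i (l.map π)) :
    ∀ (f : OForest ι) (l : List B),
      OForest.evalAux FC f (l.map π)
        = Option.map (Prod.map (List.map π) (List.map π)) (OForest.evalAux HB f l)
  | .nil, l => by simp [OForest.evalAux, Prod.map]
  | .cons t f, l => by
    unfold OForest.evalAux
    rw [proj_evalAux hπ t l]
    cases ht : OTree.evalAux HB t l with
    | none => simp
    | some p =>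
      obtain ⟨v, rest⟩ := p
      simp only [Option.map_some, Prod.map]
      rw [proj_forestEvalAux hπ f rest]
      cases hf : OForest.evalAux HB f rest with
      | none => simp
      | some q =>
        obtain ⟨vs, rest'⟩ := q
        simp [Prod.map]
end

theorem proj_eval (hπ : ∀ i l, π (HB i l) = FC i (l.map π)) (t : OTree ι) (l : List B) :
    OTree.eval FC t (l.map π) = Option.map π (OTree.eval HB t l) := by
  unfold OTree.eval
  rw [proj_evalAux π HB FC hπ t l]
  cases h : OTree.evalAux HB t l with
  | none => simp
  | some p =>
    obtain ⟨a, r⟩ := p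
    cases r with
    | nil => simp [Prod.map]
    | cons b r => simp [Prod.map]

end Proj


theorem Reduction.refl (ar : ι → ℕ) (F : ι → List A → A) (b : ℕ → A) :
    Reduction ar F b b := by
  refine ⟨fun _ => .leaf, fun _ => 1, id, strictMono_id, fun j => trivial, fun j => ?_⟩
  have : List.range 1 = [0] := rfl
  simp [OTree.eval, OTree.evalAux, this]

theorem Reduction.proj {B C : Type} {ar : ι → ℕ} {π : B → C}
    {HB : ι → List B → B} {FC : ι → List C → C}
    (hπ : ∀ i l, π (HB i l) = FC i (l.map π)) {c b : ℕ → B}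
    (h : Reduction ar HB c b) :
    Reduction ar FC (fun n => π (c n)) (fun n => π (b n)) := by
  obtain ⟨t, len, e, he, hwf, hev⟩ := h
  refine ⟨t, len, e, he, hwf, fun j => ?_⟩
  have h2 := proj_eval π HB FC hπ (t j)
    ((List.range (len j)).map (fun i => b (e ((∑ m ∈ Finset.range j, len m) + i))))
  rw [List.map_map, hev j] at h2
  simpa [Function.comp_def] using h2

theorem Reduction.lift {B C : Type} {ar : ι → ℕ} {π : B → C}
    {HB : ι → List B → B} {FC : ι → List C → C}
    (hπ : ∀ i l, π (HB i l) = FC i (l.map π)) {a : ℕ → C} {b : ℕ → B}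
    (h : Reduction ar FC a (fun n => π (b n))) :
    ∃ c : ℕ → B, Reduction ar HB c b ∧ ∀ n, π (c n) = a n := by
  obtain ⟨t, len, e, he, hwf, hev⟩ := h
  have key : ∀ j, ∃ v, OTree.eval HB (t j)
      ((List.range (len j)).map (fun i => b (e ((∑ m ∈ Finset.range j, len m) + i))))
        = some v ∧ π v = a j := by
    intro j
    have h2 := proj_eval π HB FC hπ (t j)
      ((List.range (len j)).map (fun i => b (e ((∑ m ∈ Finset.range j, len m) + i))))
    rw [List.map_map] at h2
    have h3 : Option.map π (OTree.eval HB (t j)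
        ((List.range (len j)).map (fun i => b (e ((∑ m ∈ Finset.range j, len m) + i))))) = some (a j) := by
      rw [← h2, ← hev j]
      congr 1
    cases heval : OTree.eval HB (t j)
        ((List.range (len j)).map (fun i => b (e ((∑ m ∈ Finset.range j, len m) + i)))) with
    | none => rw [heval] at h3; simp at h3
    | some v =>
      rw [heval] at h3
      exact ⟨v, rfl, by simpa using h3⟩
  choose c hc using key
  exact ⟨c, ⟨t, len, e, he, hwf, fun j => (hc j).1⟩, fun j => (hc j).2⟩

theorem FR.proj {B C : Type} {ar : ι → ℕ} {π : B → C}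
    {HB : ι → List B → B} {FC : ι → List C → C}
    (hπ : ∀ i l, π (HB i l) = FC i (l.map π)) {b : ℕ → B} {x : B}
    (h : x ∈ FR ar HB b) : π x ∈ FR ar FC (fun n => π (b n)) := by
  obtain ⟨t, l, hwf, hch, hev⟩ := h
  refine ⟨t, l, hwf, hch, ?_⟩
  have h2 := proj_eval π HB FC hπ t (l.map b)
  rw [List.map_map, hev] at h2
  simpa [Function.comp_def] using h2

theorem FR.nonempty (ar : ι → ℕ) (F : ι → List A → A) (b : ℕ → A) :
    b 0 ∈ FR ar F b :=
  ⟨.leaf, [0], trivial, List.isChain_singleton _, by simp [OTree.eval, OTree.evalAux]⟩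


theorem sum_range_mono (f : ℕ → ℕ) : Monotone (fun j => ∑ m ∈ Finset.range j, f m) :=
  monotone_nat_of_le_succ (fun n => by
    rw [Finset.sum_range_succ]; exact Nat.le_add_right _ _)

theorem FR.mono {ar : ι → ℕ} {F : ι → List A → A} {a b : ℕ → A}
    (h : Reduction ar F a b) : FR ar F a ⊆ FR ar F b := by
  obtain ⟨t, len, e, he, hwf, hev⟩ := h
  intro x hx
  obtain ⟨u, l, hu, hch, hevu⟩ := hx
  set S : ℕ → ℕ := fun j => ∑ m ∈ Finset.range j, len m with hS
  set idx : ℕ → List ℕ := fun j => (List.range (len j)).map (fun i => e (S j + i)) with hidx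
  set ps : List (OTree ι × List A × A) :=
      l.map (fun j => (t j, (idx j).map b, a j)) with hps
  have hblk : ∀ j, (idx j).map b
      = (List.range (len j)).map (fun i => b (e (S j + i))) := by
    intro j; rw [hidx]; rw [List.map_map]; rfl
  have hpsh : ∀ p ∈ ps, OTree.eval F p.1 p.2.1 = some p.2.2 := by
    intro p hp
    rw [hps] at hp
    obtain ⟨j, hj, rfl⟩ := List.mem_map.mp hp
    show OTree.eval F (t j) ((idx j).map b) = some (a j)
    rw [hblk j]
    exact hev j
  have hmap22 : ps.map (fun p => p.2.2) = l.map a := by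
    rw [hps, List.map_map]; rfl
  have hmap1 : ps.map (fun p => p.1) = l.map t := by
    rw [hps, List.map_map]; rfl
  have hmap21 : ps.map (fun p => p.2.1) = l.map (fun j => (idx j).map b) := by
    rw [hps, List.map_map]; rfl
  have heval : (u.subst (l.map t)).1.eval F ((l.map (fun j => (idx j).map b)).flatten)
      = some x := by
    rw [← hmap1, ← hmap21]
    exact subst_eval u ps x hpsh (by rw [hmap22]; exact hevu)
  refine ⟨(u.subst (l.map t)).1, (l.map idx).flatten, ?_, ?_, ?_⟩
  · exact (OTree.subst_wf ar u (l.map t) hu (by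
      intro s hs
      obtain ⟨j, hj, rfl⟩ := List.mem_map.mp hs
      exact hwf j)).1
  · rw [List.Chain', List.isChain_iff_pairwise, List.pairwise_flatten]
    constructor
    · intro l' hl'
      obtain ⟨j, hj, rfl⟩ := List.mem_map.mp hl'
      rw [hidx, List.pairwise_map]
      exact (List.pairwise_lt_range (n := len j)).imp
        (fun hij => he (Nat.add_lt_add_left hij (S j)))
    · rw [List.pairwise_map]
      refine (List.isChain_iff_pairwise.mp hch).imp ?_
      intro j j' hjj' p hp q hq
      rw [hidx] at hp hq
      obtain ⟨i, hi, rfl⟩ := List.mem_map.mp hp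
      obtain ⟨i', hi', rfl⟩ := List.mem_map.mp hq
      apply he
      calc S j + i < S j + len j := by
            exact Nat.add_lt_add_left (List.mem_range.mp hi) (S j)
        _ = S (j+1) := by simp only [hS]; rw [Finset.sum_range_succ]
        _ ≤ S j' := sum_range_mono len (Nat.succ_le_of_lt hjj')
        _ ≤ S j' + i' := Nat.le_add_right _ _
  · rw [List.map_flatten, List.map_map]
    exact heval


section Psi

open scoped Classical

variable (M : ℕ → ℕ) (v : ℕ → ℕ → ℕ)

noncomputable def intended (m : ℕ) : ℕ :=
  if h : ∃ n, m < M (n + 1) then v (Nat.find h) (m - M (Nat.find h)) else 0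

noncomputable def psi : ℕ → ℕ :=
  fun m => Nat.rec (intended M v 0) (fun m ih => max (ih + 1) (intended M v (m + 1))) m

theorem psi_succ (m : ℕ) : psi M v (m + 1) = max (psi M v m + 1) (intended M v (m + 1)) :=
  rfl

theorem psi_strictMono : StrictMono (psi M v) :=
  strictMono_nat_of_lt_succ (fun n => lt_of_lt_of_le (Nat.lt_succ_self _)
    (by rw [psi_succ]; exact le_max_left _ _))

variable (hM : Monotone M) (hM0 : M 0 = 0)

include hM hM0 in
theorem find_eq {pos n : ℕ} (h1 : M n ≤ pos) (h2 : pos < M (n + 1))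
    (h : ∃ k, pos < M (k + 1)) : Nat.find h = n := by
  refine le_antisymm (Nat.find_le h2) (le_of_not_gt fun hlt => ?_)
  have h3 := Nat.find_spec h
  have h4 : M (Nat.find h + 1) ≤ M n := hM (Nat.succ_le_of_lt hlt)
  omega

include hM hM0 in
theorem intended_eq {pos n : ℕ} (h1 : M n ≤ pos) (h2 : pos < M (n + 1)) :
    intended M v pos = v n (pos - M n) := by
  have h : ∃ k, pos < M (k + 1) := ⟨n, h2⟩
  rw [intended, dif_pos h, find_eq M hM hM0 h1 h2 h]

include hM hM0 in
theorem find_bounds {pos : ℕ} (h : ∃ k, pos < M (k + 1)) :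
    M (Nat.find h) ≤ pos ∧ pos < M (Nat.find h + 1) := by
  refine ⟨?_, Nat.find_spec h⟩
  rcases Nat.eq_zero_or_pos (Nat.find h) with h0 | hpos
  · rw [h0, hM0]; exact Nat.zero_le _
  · have hmin := Nat.find_min h (Nat.sub_lt hpos one_pos)
    have h2 : Nat.find h - 1 + 1 = Nat.find h := by omega
    rw [h2] at hmin
    exact le_of_not_gt hmin

include hM hM0 in
theorem intended_lt (hv1 : ∀ n, StrictMono (v n))
    (hv2 : ∀ n n' i, n < n' → M n + i < M (n + 1) → v n i < v n' 0)
    (m : ℕ) (h : ∃ n, m + 1 < M (n + 1)) :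
    intended M v m < intended M v (m + 1) := by
  have h' : ∃ n, m < M (n + 1) := ⟨h.choose, lt_trans (Nat.lt_succ_self m) h.choose_spec⟩
  set n := Nat.find h' with hn
  set n' := Nat.find h with hn'
  obtain ⟨hb1, hb2⟩ := find_bounds M hM hM0 h'
  obtain ⟨hb1', hb2'⟩ := find_bounds M hM hM0 h
  rw [← hn] at hb1 hb2
  rw [← hn'] at hb1' hb2'
  rw [intended, dif_pos h', intended, dif_pos h, ← hn, ← hn']
  have hnn' : n ≤ n' := Nat.find_le (lt_trans (Nat.lt_succ_self m) hb2')
  rcases eq_or_lt_of_le hnn' with heq | hlt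
  · rw [← heq]
    exact hv1 n (by omega)
  · have hMn1 : M (n + 1) ≤ m + 1 := le_of_not_gt (Nat.find_min h hlt)
    have hMn' : M n' = m + 1 :=
      le_antisymm hb1' (le_trans (Nat.succ_le_of_lt hb2) (hM (Nat.succ_le_of_lt hlt)))
    have : m + 1 - M n' = 0 := by omega
    rw [this]
    exact hv2 n n' (m - M n) hlt (by omega)

include hM hM0 in
theorem psi_eq_intended (hv1 : ∀ n, StrictMono (v n))
    (hv2 : ∀ n n' i, n < n' → M n + i < M (n + 1) → v n i < v n' 0) :
    ∀ m, (∃ n, m < M (n + 1)) → psi M v m = intended M v m := by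
  intro m
  induction m with
  | zero => intro _; rfl
  | succ k ih =>
    intro h
    rw [psi_succ, ih ⟨h.choose, lt_trans (Nat.lt_succ_self k) h.choose_spec⟩]
    exact max_eq_right (Nat.succ_le_of_lt (intended_lt M v hM hM0 hv1 hv2 k h))

end Psi


theorem Reduction.trans {ar : ι → ℕ} {F : ι → List A → A} {a b c : ℕ → A}
    (hab : Reduction ar F a b) (hbc : Reduction ar F b c) :
    Reduction ar F a c := by
  obtain ⟨t, len, e, he, hwf, hev⟩ := hab
  obtain ⟨s, len', e', he', hwf', hev'⟩ := hbc
  set S : ℕ → ℕ := fun j => ∑ m ∈ Finset.range j, len m with hS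
  set L : ℕ → ℕ := fun k => ∑ m ∈ Finset.range k, len' m with hL
  set M : ℕ → ℕ := fun n => ∑ m ∈ Finset.range n, len' (e m) with hM
  set v : ℕ → ℕ → ℕ := fun n off => e' (L (e n) + off) with hv
  have hMmono : Monotone M := sum_range_mono _
  have hM0 : M 0 = 0 := rfl
  have hMsucc : ∀ n, M (n + 1) = M n + len' (e n) := by
    intro n; simp only [hM]; rw [Finset.sum_range_succ]
  have hLsucc : ∀ k, L (k + 1) = L k + len' k := by
    intro k; simp only [hL]; rw [Finset.sum_range_succ]
  have hLmono : Monotone L := sum_range_mono _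
  have hv1 : ∀ n, StrictMono (v n) := fun n i j hij =>
    he' (Nat.add_lt_add_left hij _)
  have hv2 : ∀ n n' i, n < n' → M n + i < M (n + 1) → v n i < v n' 0 := by
    intro n n' i hnn' hi
    apply he'
    rw [Nat.add_zero]
    have hi' : i < len' (e n) := by rw [hMsucc n] at hi; omega
    calc L (e n) + i < L (e n) + len' (e n) := Nat.add_lt_add_left hi' _
      _ = L (e n + 1) := (hLsucc (e n)).symm
      _ ≤ L (e n') := hLmono (Nat.succ_le_of_lt (he hnn'))
  have hψval : ∀ n i, i < len' (e n) → psi M v (M n + i) = e' (L (e n) + i) := by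
    intro n i hi
    have hcon : M n + i < M (n + 1) := by rw [hMsucc n]; omega
    rw [psi_eq_intended M v hMmono hM0 hv1 hv2 _ ⟨n, hcon⟩,
      intended_eq M v hMmono hM0 (Nat.le_add_right _ _) hcon]
    simp [hv]
  -- block decomposition lemma
  have hblock : ∀ (d u : ℕ),
      (List.range (M (u + d) - M u)).map (fun i => c (psi M v (M u + i)))
        = ((List.range d).map (fun i => (List.range (len' (e (u + i)))).map
            (fun i' => c (e' (L (e (u + i)) + i'))))).flatten := by
    intro d
    induction d with
    | zero => intro u; simp
    | succ d ih =>
      intro u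
      have hle : M u ≤ M (u + d) := hMmono (Nat.le_add_right _ _)
      have hsplit : M (u + (d + 1)) - M u = (M (u + d) - M u) + len' (e (u + d)) := by
        have := hMsucc (u + d)
        have h2 : u + (d + 1) = (u + d) + 1 := by omega
        rw [h2, this]; omega
      rw [hsplit, List.range_add, List.map_append, ih u, List.range_succ,
        List.map_append, List.flatten_append]
      congr 1
      simp only [List.map_map, List.map_cons, List.map_nil, List.flatten_cons,
        List.flatten_nil, List.append_nil]
      apply List.map_congr_left
      intro i hi
      have hi' : i < len' (e (u + d)) := List.mem_range.mp hi
      show c (psi M v (M u + ((M (u + d) - M u) + i))) = c (e' (L (e (u + d)) + i))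
      have harg : M u + ((M (u + d) - M u) + i) = M (u + d) + i := by omega
      rw [harg, hψval (u + d) i hi']
  have hSsucc : ∀ j, S (j + 1) = S j + len j := by
    intro j; simp only [hS]; rw [Finset.sum_range_succ]
  have hSmono : Monotone S := sum_range_mono _
  have hMS : ∀ j, ∑ m ∈ Finset.range j, (M (S (m + 1)) - M (S m)) = M (S j) := by
    intro j
    induction j with
    | zero => simp [hS, hM]
    | succ k ih =>
      rw [Finset.sum_range_succ, ih]
      have : M (S k) ≤ M (S (k + 1)) := hMmono (hSmono (Nat.le_succ k))
      omega
  refine ⟨fun j => ((t j).subst ((List.range (len j)).map (fun i => s (e (S j + i))))).1,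
    fun j => M (S (j + 1)) - M (S j), psi M v, psi_strictMono M v, ?_, ?_⟩
  · intro j
    refine (OTree.subst_wf ar (t j) _ (hwf j) ?_).1
    intro u hu
    obtain ⟨i, hi, rfl⟩ := List.mem_map.mp hu
    exact hwf' _
  · intro j
    set ps : List (OTree ι × List A × A) := (List.range (len j)).map
      (fun i => (s (e (S j + i)),
        (List.range (len' (e (S j + i)))).map (fun i' => c (e' (L (e (S j + i)) + i'))),
        b (e (S j + i)))) with hps
    have hpsh : ∀ p ∈ ps, OTree.eval F p.1 p.2.1 = some p.2.2 := by
      intro p hp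
      rw [hps] at hp
      obtain ⟨i, hi, rfl⟩ := List.mem_map.mp hp
      exact hev' (e (S j + i))
    have hmap22 : ps.map (fun p => p.2.2)
        = (List.range (len j)).map (fun i => b (e (S j + i))) := by
      rw [hps, List.map_map]; rfl
    have hmap1 : ps.map (fun p => p.1)
        = (List.range (len j)).map (fun i => s (e (S j + i))) := by
      rw [hps, List.map_map]; rfl
    have hmap21 : ps.map (fun p => p.2.1)
        = (List.range (len j)).map (fun i => (List.range (len' (e (S j + i)))).map
            (fun i' => c (e' (L (e (S j + i)) + i')))) := by
      rw [hps, List.map_map]; rfl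
    have heval := subst_eval (t j) ps (a j) hpsh (by rw [hmap22]; exact hev j)
    rw [hmap1, hmap21] at heval
    have hsum : ∑ m ∈ Finset.range j, (M (S (m + 1)) - M (S m)) = M (S j) := hMS j
    rw [hsum]
    have hb := hblock (len j) (S j)
    rw [← hSsucc j] at hb
    rw [hb]
    convert heval using 3

theorem exists_singleton_FR {B : Type} [Finite B] {ar : ι → ℕ}
    {H : ι → List A → A} {Fb : ι → List B → B} {π : A → B}
    (hπ : ∀ i l, π (H i l) = Fb i (l.map π))
    (hRam : RamseyAlgebra ar Fb) (c : ℕ → A) :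
    ∃ d, Reduction ar H d c ∧ ∃ x, FR ar Fb (fun n => π (d n)) ⊆ {x} := by
  have := Fintype.ofFinite B
  have : DecidableEq B := Classical.decEq B
  have main : ∀ (s : Finset B) (c : ℕ → A), ∃ d, Reduction ar H d c ∧
      ((∃ x, FR ar Fb (fun n => π (d n)) ⊆ {x}) ∨
        ∀ y ∈ FR ar Fb (fun n => π (d n)), y ∉ s) := by
    intro s
    induction s using Finset.induction_on with
    | empty => intro c; exact ⟨c, Reduction.refl ar H c, Or.inr (by simp)⟩
    | @insert x s hx ih =>
      intro c
      obtain ⟨d, hdred, hd⟩ := ih c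
      rcases hd with hsing | hmiss
      · exact ⟨d, hdred, Or.inl hsing⟩
      · obtain ⟨a', ha'red, ha'hom⟩ := hRam (fun n => π (d n)) {x}
        obtain ⟨d', hd'red, hd'π⟩ := Reduction.lift hπ ha'red
        have hπd' : (fun n => π (d' n)) = a' := funext hd'π
        refine ⟨d', hd'red.trans hdred, ?_⟩
        rcases ha'hom with hsub | hdisj
        · exact Or.inl ⟨x, by rw [hπd']; exact hsub⟩
        · right
          intro y hy hmem
          rw [hπd'] at hy
          rcases Finset.mem_insert.mp hmem with rfl | hmem'
          · have : y ∈ FR ar Fb a' ∩ {y} := ⟨hy, rfl⟩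
            rw [hdisj] at this
            exact this
          · exact hmiss y (FR.mono ha'red hy) hmem'
  obtain ⟨d, hred, hd⟩ := main Finset.univ c
  rcases hd with hsing | hmiss
  · exact ⟨d, hred, hsing⟩
  · exact absurd (Finset.mem_univ (π (d 0)))
      (hmiss _ (FR.nonempty ar Fb (fun n => π (d n))))

end RamseyAlg


open RamseyAlg in
/-- The Cartesian product of two finite Ramsey algebras over the same
language (with coordinatewise operations) is a Ramsey algebra. -/
theorem stmt16 (ι A₁ A₂ : Type) [Finite A₁] [Finite A₂] (ar : ι → ℕ)
    (F : ι → List A₁ → A₁) (G : ι → List A₂ → A₂)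
    (h₁ : RamseyAlgebra ar F) (h₂ : RamseyAlgebra ar G) :
    RamseyAlgebra ar
      (fun i (l : List (A₁ × A₂)) => (F i (l.map Prod.fst), G i (l.map Prod.snd))) := by
  intro b X
  have hπ1 : ∀ i (l : List (A₁ × A₂)),
      Prod.fst ((fun i (l : List (A₁ × A₂)) =>
        (F i (l.map Prod.fst), G i (l.map Prod.snd))) i l) = F i (l.map Prod.fst) :=
    fun i l => rfl
  have hπ2 : ∀ i (l : List (A₁ × A₂)),
      Prod.snd ((fun i (l : List (A₁ × A₂)) =>
        (F i (l.map Prod.fst), G i (l.map Prod.snd))) i l) = G i (l.map Prod.snd) :=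
    fun i l => rfl
  obtain ⟨c, hcred, x₀, hx₀⟩ := exists_singleton_FR hπ1 h₁ b
  obtain ⟨d, hdred, y₀, hy₀⟩ := exists_singleton_FR hπ2 h₂ c
  have hdb := hdred.trans hcred
  have hfst : FR ar F (fun n => (d n).1) ⊆ {x₀} :=
    (FR.mono (Reduction.proj hπ1 hdred)).trans hx₀
  have hFRd : FR ar (fun i (l : List (A₁ × A₂)) =>
      (F i (l.map Prod.fst), G i (l.map Prod.snd))) d ⊆ {(x₀, y₀)} := by
    intro p hp
    have h1 : p.1 = x₀ := hfst (FR.proj hπ1 hp)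
    have h2 : p.2 = y₀ := hy₀ (FR.proj hπ2 hp)
    show p = (x₀, y₀)
    rw [← h1, ← h2]
  by_cases hmem : (x₀, y₀) ∈ X
  · exact ⟨d, hdb, Or.inl (fun p hp => by
      rw [Set.mem_singleton_iff.mp (hFRd hp)]; exact hmem)⟩
  · refine ⟨d, hdb, Or.inr ?_⟩
    ext p
    simp only [Set.mem_inter_iff, Set.mem_empty_iff_false, iff_false, not_and]
    intro hp hpX
    rw [Set.mem_singleton_iff.mp (hFRd hp)] at hpX
    exact hmem hpX
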